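/- Let λ₁ ≥ λ₂ ≥ λ₃ ≥ λ₄ be integers with λ₁ + λ₂ + λ₃ + λ₄ = 0 and λ₂ ≤ 0. Define d(λ₁,λ₂,λ₃,λ₄) as the number of triples of integers (μ₁, μ₂, μ₃) with λ₁ ≥ μ₁ ≥ λ₂ ≥ μ₂ ≥ λ₃ ≥ μ₃ ≥ λ₄ and μ₁ + μ₂ + μ₃ = 0, counted with weight equal to the dimension of the zero weight space of the GL₃-representation with highest weight (μ₁,μ₂,μ₃) (which is μ₂ - μ₃ + 1 if μ₂ ≤ 0 and μ₁ - μ₂ + 1 if μ₂ ≥ 0). Then d(λ₁,λ₂,λ₃,λ₄) = (1/2)(λ₂ - λ₃ + 1)(λ₃ - λ₄ + 1)(λ₂ - λ₄ + 2). -/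

import Mathlib

lemma sum_Icc_int (a : ℤ) : ∀ b : ℤ, a - 1 ≤ b →
    (∑ x ∈ Finset.Icc a b, (x : ℚ)) = (a + b) * (b + 1 - a) / 2 := by
  refine fun b hb => Int.le_induction (motive := fun b _ => (∑ x ∈ Finset.Icc a b, (x : ℚ)) = (a + b) * (b + 1 - a) / 2) (m := a - 1) ?_ ?_ b hb
  · beta_reduce
    rw [show Finset.Icc a (a - 1) = ∅ from Finset.Icc_eq_empty (by omega)]
    push_cast
    ring
  · intro n hn ih
    beta_reduce
    have h : Finset.Icc a (n + 1) = insert (n + 1) (Finset.Icc a n) := by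
      ext x; simp; omega
    rw [h, Finset.sum_insert (by simp), ih]
    push_cast
    ring

theorem stmt_4 (l1 l2 l3 l4 : ℤ) (h12 : l2 ≤ l1) (h23 : l3 ≤ l2) (h34 : l4 ≤ l3)
    (hsum : l1 + l2 + l3 + l4 = 0) (h2 : l2 ≤ 0) :
    ((∑ μ ∈ (Finset.Icc l2 l1 ×ˢ Finset.Icc l3 l2 ×ˢ Finset.Icc l4 l3).filter
        (fun μ : ℤ × ℤ × ℤ => μ.1 + μ.2.1 + μ.2.2 = 0),
      (if μ.2.1 ≤ 0 then μ.2.1 - μ.2.2 + 1 else μ.1 - μ.2.1 + 1) : ℤ) : ℚ)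
    = (1/2 : ℚ) * (l2 - l3 + 1) * (l3 - l4 + 1) * (l2 - l4 + 2) := by
  have hset : (Finset.Icc l2 l1 ×ˢ Finset.Icc l3 l2 ×ˢ Finset.Icc l4 l3).filter
      (fun μ : ℤ × ℤ × ℤ => μ.1 + μ.2.1 + μ.2.2 = 0)
      = (Finset.Icc l3 l2 ×ˢ Finset.Icc l4 l3).image
        (fun p : ℤ × ℤ => (-(p.1 + p.2), p.1, p.2)) := by
    ext ⟨x, y, z⟩
    simp only [Finset.mem_filter, Finset.mem_product, Finset.mem_Icc, Finset.mem_image,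
      Prod.mk.injEq, Prod.exists]
    constructor
    · rintro ⟨⟨⟨hx1, hx2⟩, ⟨hy1, hy2⟩, hz1, hz2⟩, hs⟩
      exact ⟨y, z, ⟨⟨hy1, hy2⟩, hz1, hz2⟩, by omega⟩
    · rintro ⟨a, b, ⟨⟨ha1, ha2⟩, hb1, hb2⟩, hx, hy, hz⟩
      subst hy; subst hz; subst hx
      refine ⟨⟨⟨by omega, by omega⟩, ⟨ha1, ha2⟩, hb1, hb2⟩, by omega⟩
  rw [hset, Finset.sum_image (by intro a _ b _ h; simp at h; ext <;> simp [h.1, h.2])]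
  have hcongr : ∀ p ∈ Finset.Icc l3 l2 ×ˢ Finset.Icc l4 l3,
      (if p.1 ≤ 0 then p.1 - p.2 + 1 else -(p.1 + p.2) - p.1 + 1) = p.1 - p.2 + 1 := by
    rintro ⟨a, b⟩ hp
    simp only [Finset.mem_product, Finset.mem_Icc] at hp
    rw [if_pos (by omega)]
  rw [Finset.sum_congr rfl hcongr]
  rw [Finset.sum_product]
  push_cast
  have h1 : ∀ a : ℤ, (∑ b ∈ Finset.Icc l4 l3, ((a : ℚ) - (b : ℚ) + 1))
      = (l3 - l4 + 1) * (a + 1) - (l4 + l3) * (l3 + 1 - l4) / 2 := by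
    intro a
    rw [Finset.sum_congr rfl (fun b _ => by ring : ∀ b ∈ Finset.Icc l4 l3,
      ((a : ℚ) - (b : ℚ) + 1) = ((a : ℚ) + 1) - (b : ℚ)), Finset.sum_sub_distrib,
      Finset.sum_const, sum_Icc_int l4 l3 (by omega), Int.card_Icc, nsmul_eq_mul]
    have hc : (((l3 + 1 - l4).toNat : ℕ) : ℚ) = (l3 : ℚ) + 1 - l4 := by
      have h := Int.toNat_of_nonneg (show (0:ℤ) ≤ l3 + 1 - l4 by omega)
      have := congrArg (fun z : ℤ => (z : ℚ)) h
      push_cast at this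
      linarith [this]
    rw [hc]
    ring
  rw [Finset.sum_congr rfl (fun a _ => h1 a), Finset.sum_sub_distrib, Finset.sum_const,
    ← Finset.mul_sum, Finset.sum_add_distrib, Finset.sum_const, sum_Icc_int l3 l2 (by omega),
    Int.card_Icc, nsmul_eq_mul]
  have hc : (((l2 + 1 - l3).toNat : ℕ) : ℚ) = (l2 : ℚ) + 1 - l3 := by
    have h := Int.toNat_of_nonneg (show (0:ℤ) ≤ l2 + 1 - l3 by omega)
    have := congrArg (fun z : ℤ => (z : ℚ)) h
    push_cast at this
    linarith [this]
  simp only [nsmul_eq_mul]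
  rw [hc]
  ring
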